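/- If positive integers k and n with n ≥ k ≥ 3 satisfy (k!)^(n!) + k^n = (n!)^(k!) + n^k, then k divides n. -/

import Mathlib

/-- Diagonal strict inequality: `(b+1)^b < b^(b+1)` for `b ≥ 3`. -/
lemma diag_pow_lt : ∀ b : ℕ, 3 ≤ b → (b + 1) ^ b < b ^ (b + 1) := by
  intro b hb
  induction b, hb using Nat.le_induction with
  | base => norm_num
  | succ b hb ih =>
    refine Nat.lt_of_mul_lt_mul_right (a := b ^ (b + 1)) ?_
    calc (b + 1 + 1) ^ (b + 1) * b ^ (b + 1)
        = ((b + 2) * b) ^ (b + 1) := by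
          rw [← Nat.mul_pow]
      _ ≤ ((b + 1) * (b + 1)) ^ (b + 1) := Nat.pow_le_pow_left (by nlinarith) _
      _ = (b + 1) ^ (b + 2) * (b + 1) ^ b := by
          rw [← Nat.pow_add, ← sq, ← pow_mul]
          congr 1
          ring
      _ < (b + 1) ^ (b + 2) * b ^ (b + 1) := by
          have hpos : 0 < (b + 1) ^ (b + 2) := Nat.pow_pos (by omega)
          gcongr

/-- `a^b ≤ b^a` for `3 ≤ b ≤ a`. -/
lemma pow_swap_le : ∀ a b : ℕ, 3 ≤ b → b ≤ a → a ^ b ≤ b ^ a := by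
  intro a b hb hba
  induction a, hba using Nat.le_induction with
  | base => exact le_refl _
  | succ a ha ih =>
    have key : (a + 1) ^ b ≤ b * a ^ b := by
      have hbb : 0 < b ^ b := Nat.pow_pos (by omega)
      refine Nat.le_of_mul_le_mul_left ?_ hbb
      calc b ^ b * (a + 1) ^ b
          = (b * (a + 1)) ^ b := (Nat.mul_pow _ _ _).symm
        _ ≤ (a * (b + 1)) ^ b := Nat.pow_le_pow_left (by nlinarith) _
        _ = a ^ b * (b + 1) ^ b := Nat.mul_pow _ _ _
        _ ≤ a ^ b * b ^ (b + 1) :=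
            Nat.mul_le_mul_left _ (le_of_lt (diag_pow_lt b hb))
        _ = b ^ b * (b * a ^ b) := by rw [Nat.pow_succ]; ring
    calc (a + 1) ^ b ≤ b * a ^ b := key
      _ ≤ b * b ^ a := Nat.mul_le_mul_left _ ih
      _ = b ^ (a + 1) := by rw [Nat.pow_succ]; ring

/-- Strict version: `a^b < b^a` for `3 ≤ b < a`. -/
lemma pow_swap_lt (a b : ℕ) (hb : 3 ≤ b) (hba : b < a) : a ^ b < b ^ a := by
  obtain ⟨c, rfl⟩ : ∃ c, a = c + 1 := ⟨a - 1, by omega⟩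
  have hc : b ≤ c := by omega
  have key : (c + 1) ^ b < b * c ^ b := by
    have hbb : 0 < b ^ b := Nat.pow_pos (by omega)
    refine Nat.lt_of_mul_lt_mul_left (a := b ^ b) ?_
    calc b ^ b * (c + 1) ^ b
        = (b * (c + 1)) ^ b := (Nat.mul_pow _ _ _).symm
      _ ≤ (c * (b + 1)) ^ b := Nat.pow_le_pow_left (by nlinarith) _
      _ = c ^ b * (b + 1) ^ b := Nat.mul_pow _ _ _
      _ < c ^ b * b ^ (b + 1) := by
          have hcpos : 0 < c ^ b := Nat.pow_pos (by omega)
          gcongr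
          exact diag_pow_lt b hb
      _ = b ^ b * (b * c ^ b) := by rw [Nat.pow_succ]; ring
  calc (c + 1) ^ b < b * c ^ b := key
    _ ≤ b * b ^ c := Nat.mul_le_mul_left _ (pow_swap_le c b hb hc)
    _ = b ^ (c + 1) := by rw [Nat.pow_succ]; ring

theorem stmt_13 (k n : ℕ) (hk : 3 ≤ k) (hkn : k ≤ n)
    (h : (Nat.factorial k) ^ (Nat.factorial n) + k ^ n =
      (Nat.factorial n) ^ (Nat.factorial k) + n ^ k) : k ∣ n := by
  rcases eq_or_lt_of_le hkn with rfl | hlt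
  · exact dvd_refl k
  · exfalso
    have hfk : 3 ≤ Nat.factorial k := by
      have := Nat.self_le_factorial k; omega
    have hflt : Nat.factorial k < Nat.factorial n :=
      (Nat.factorial_lt (by omega)).mpr hlt
    have h1 : (Nat.factorial n) ^ (Nat.factorial k) < (Nat.factorial k) ^ (Nat.factorial n) :=
      pow_swap_lt _ _ hfk hflt
    have h2 : n ^ k < k ^ n := pow_swap_lt n k hk hlt
    omega
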